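/- Assume L = 1/3 and that S takes all its values in (1/2)ℤ. Then the integer ∑_{x=1, gcd(x,m)=1}^{(m−1)/2} χ(x)·2S(x/m) is odd. (When S comes from the modular symbols of the elliptic curve E : y² + y = x³ + 2, this integer equals the algebraic L-value L(E^{(m)},1)/Ω_{E^{(m)}} of the quadratic twist E^{(m)}, which is therefore an odd integer.) -/
import Mathlib

open Finset

private lemma fold_sum (S : ℚ → ℝ) (t : ℚ → ℤ) (ht : ∀ β, S β = (t β : ℝ) / 2)
    (hS0 : S 0 = 0) (hSneg : ∀ β : ℚ, S (-β) = S β) (hSper : ∀ β : ℚ, S (β + 1) = S β)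
    (n : ℕ) (hn1 : 1 < n) (hodd : n % 2 = 1) :
    ∑ x ∈ Finset.range n, S ((x : ℚ) / (n : ℚ)) =
      ∑ x ∈ Finset.Icc 1 ((n - 1) / 2), ((t ((x : ℚ) / (n : ℚ)) : ℝ)) := by
  set h := (n - 1) / 2 with hh
  have hn0 : (n : ℚ) ≠ 0 := by
    exact_mod_cast (by omega : (n : ℕ) ≠ 0)
  have refl : ∑ x ∈ Finset.Ico (h+1) n, S ((x:ℚ)/(n:ℚ))
      = ∑ x ∈ Finset.Ico 1 (h+1), S ((x:ℚ)/(n:ℚ)) := by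
    refine Finset.sum_nbij' (fun x => n - x) (fun x => n - x) ?_ ?_ ?_ ?_ ?_
    · intro x hx; simp only [Finset.mem_Ico] at hx ⊢; omega
    · intro x hx; simp only [Finset.mem_Ico] at hx ⊢; omega
    · intro x hx; simp only [Finset.mem_Ico] at hx; show n - (n - x) = x; omega
    · intro x hx; simp only [Finset.mem_Ico] at hx; show n - (n - x) = x; omega
    · intro x hx
      simp only [Finset.mem_Ico] at hx
      have hxn : x ≤ n := by omega
      have harg : ((n - x : ℕ) : ℚ) / (n : ℚ) = -((x:ℚ)/(n:ℚ)) + 1 := by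
        rw [Nat.cast_sub hxn]
        field_simp
        ring
      rw [harg, hSper, hSneg]
  have e0 : ∑ x ∈ Finset.Ico (0:ℕ) 1, S ((x:ℚ)/(n:ℚ)) = 0 := by
    simp [hS0]
  have e1 : (∑ x ∈ Finset.Ico (0:ℕ) 1, S ((x:ℚ)/(n:ℚ)) + ∑ x ∈ Finset.Ico 1 (h+1), S ((x:ℚ)/(n:ℚ)))
      + ∑ x ∈ Finset.Ico (h+1) n, S ((x:ℚ)/(n:ℚ)) = ∑ x ∈ Finset.range n, S ((x:ℚ)/(n:ℚ)) := by
    rw [Finset.sum_Ico_consecutive _ (by omega) (by omega),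
      Finset.sum_Ico_consecutive _ (by omega) (by omega), Finset.range_eq_Ico]
  calc ∑ x ∈ Finset.range n, S ((x:ℚ)/(n:ℚ))
      = (∑ x ∈ Finset.Ico (0:ℕ) 1, S ((x:ℚ)/(n:ℚ)) + ∑ x ∈ Finset.Ico 1 (h+1), S ((x:ℚ)/(n:ℚ)))
        + ∑ x ∈ Finset.Ico (h+1) n, S ((x:ℚ)/(n:ℚ)) := e1.symm
    _ = ∑ x ∈ Finset.Ico 1 (h+1), S ((x:ℚ)/(n:ℚ)) + ∑ x ∈ Finset.Ico 1 (h+1), S ((x:ℚ)/(n:ℚ)) := by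
        rw [e0, refl]; ring
    _ = ∑ x ∈ Finset.Ico 1 (h+1), ((t ((x : ℚ) / (n : ℚ)) : ℝ)) := by
        rw [← Finset.sum_add_distrib]
        refine Finset.sum_congr rfl fun x _ => ?_
        rw [ht]; ring
    _ = ∑ x ∈ Finset.Icc 1 h, ((t ((x : ℚ) / (n : ℚ)) : ℝ)) := by
        rw [Finset.Ico_add_one_right_eq_Icc]

private lemma divisors_pq {p q : ℕ} (hp : p.Prime) (hq : q.Prime) (hpq : p ≠ q) :
    Nat.divisors (p * q) = {1, p, q, p * q} := by
  have hp0 : p ≠ 0 := hp.ne_zero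
  have hq0 : q ≠ 0 := hq.ne_zero
  ext d
  simp only [Nat.mem_divisors, Finset.mem_insert, Finset.mem_singleton]
  constructor
  · rintro ⟨hd, -⟩
    by_cases hpd : p ∣ d
    · obtain ⟨e, rfl⟩ := hpd
      have he : e ∣ q := (mul_dvd_mul_iff_left (by exact_mod_cast hp0 : p ≠ 0)).mp hd
      rcases (Nat.Prime.eq_one_or_self_of_dvd hq e he) with h | h <;> simp [h]
    · have hco : Nat.Coprime d p := Nat.Coprime.symm ((Nat.Prime.coprime_iff_not_dvd hp).mpr hpd)
      have : d ∣ q := (Nat.Coprime.dvd_of_dvd_mul_left hco) hd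
      rcases (Nat.Prime.eq_one_or_self_of_dvd hq d this) with h | h <;> simp [h]
  · have hmn : p * q ≠ 0 := by positivity
    rintro (rfl | rfl | rfl | rfl)
    · exact ⟨one_dvd _, hmn⟩
    · exact ⟨dvd_mul_right _ _, hmn⟩
    · exact ⟨dvd_mul_left _ _, hmn⟩
    · exact ⟨dvd_rfl, hmn⟩

private lemma reindex_mult (t : ℚ → ℤ) {p q : ℕ} (hp : 2 ≤ p) (hq1 : 1 < q) :
    ∑ x ∈ (Finset.Icc 1 ((p*q-1)/2)).filter (fun x => p ∣ x), t ((x:ℚ)/((p*q:ℕ):ℚ))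
      = ∑ y ∈ Finset.Icc 1 ((q-1)/2), t ((y:ℚ)/(q:ℚ)) := by
  have hp0 : (p:ℚ) ≠ 0 := by exact_mod_cast (by omega : p ≠ 0)
  refine Finset.sum_nbij' (fun x => x / p) (fun y => p * y) ?_ ?_ ?_ ?_ ?_
  · intro x hx
    simp only [Finset.mem_filter, Finset.mem_Icc] at hx
    obtain ⟨⟨hx1, hx2⟩, k, rfl⟩ := hx
    have h2 : 2 * (p * k) ≤ p * q - 1 := by omega
    simp only [Nat.mul_div_cancel_left k (by omega : 0 < p), Finset.mem_Icc]
    constructor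
    · rcases Nat.eq_zero_or_pos k with rfl | h
      · omega
      · exact h
    · by_contra hk
      have hk2 : q ≤ 2 * k := by omega
      have h3 : p * q ≤ p * (2 * k) := Nat.mul_le_mul (Nat.le_refl p) hk2
      have e2 : p * (2 * k) = 2 * (p * k) := by ring
      omega
  · intro y hy
    simp only [Finset.mem_Icc] at hy
    simp only [Finset.mem_filter, Finset.mem_Icc]
    have h2 : 2 * y ≤ q - 1 := by omega
    have h3 : p * (2 * y) ≤ p * (q - 1) := Nat.mul_le_mul (Nat.le_refl p) h2
    have e1 : p * (2 * y) = 2 * (p * y) := by ring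
    have e2 : p * (q - 1) = p * q - p := by
      have : p * (q - 1) + p = p * q := by
        have hq' : q - 1 + 1 = q := by omega
        calc p * (q - 1) + p = p * ((q - 1) + 1) := by ring
          _ = p * q := by rw [hq']
      omega
    refine ⟨⟨?_, ?_⟩, dvd_mul_right _ _⟩
    · have : 0 < p * y := Nat.mul_pos (by omega) (by omega)
      omega
    · omega
  · intro x hx
    simp only [Finset.mem_filter, Finset.mem_Icc] at hx
    exact Nat.mul_div_cancel' hx.2 
  · intro y _
    exact Nat.mul_div_cancel_left y (by omega : 0 < p)
  · intro x hx
    simp only [Finset.mem_filter, Finset.mem_Icc] at hx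
    obtain ⟨-, k, rfl⟩ := hx
    simp only [Nat.mul_div_cancel_left k (by omega : 0 < p)]
    congr 1
    push_cast
    rw [mul_div_mul_left _ _ hp0]

set_option maxHeartbeats 1000000 in
theorem algebraic_L_value_of_quadratic_twist_is_odd
    (N : ℕ) (hN : Odd N)
    (a : ℕ → ℤ) (ha1 : a 1 = 1)
    (hamul : ∀ m k : ℕ, Nat.Coprime m k → a (m * k) = a m * a k)
    (S : ℚ → ℝ)
    (hS0 : S 0 = 0) (hSneg : ∀ β : ℚ, S (-β) = S β) (hSper : ∀ β : ℚ, S (β + 1) = S β)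
    (hHecke : ∀ ℓ : ℕ, ℓ.Prime → ¬(ℓ ∣ N) → ∀ β : ℚ, Nat.Coprime β.den N →
      ∑ x ∈ Finset.range ℓ, S ((β + (x : ℚ)) / (ℓ : ℚ)) =
        (a ℓ : ℝ) * S β - S ((ℓ : ℚ) * β) + ∑ x ∈ Finset.range ℓ, S ((x : ℚ) / (ℓ : ℚ)))
    (L : ℝ)
    (hL : ∀ M : ℕ, 0 < M → Nat.Coprime M N →
      ((a M : ℝ) - (∑ d ∈ Nat.divisors M, d : ℕ)) * L =
        ∑ l ∈ Nat.divisors M, ∑ x ∈ Finset.range l, S ((x : ℚ) / (l : ℚ)))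
    (hL3 : L = 1 / 3)
    (hhalf : ∀ β : ℚ, ∃ c : ℤ, S β = (c : ℝ) / 2)
    (p q : ℕ) (hp : p.Prime) (hq : q.Prime) (hpq : p ≠ q)
    (hpN : ¬(p ∣ N)) (hqN : ¬(q ∣ N))
    (hp12 : p % 12 = 7) (hq12 : q % 12 = 7)
    (hap : Odd (a p)) (haq : Odd (a q)) :
    ∃ c : ℤ, Odd c ∧
      (c : ℝ) =
        ∑ x ∈ (Finset.Icc 1 ((p * q - 1) / 2)).filter (fun x => Nat.gcd x (p * q) = 1),
          (jacobiSym (x : ℤ) (p * q) : ℝ) * (2 * S ((x : ℚ) / (p * q : ℚ))) := by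
  choose t ht using hhalf
  have hp2 : p % 2 = 1 := by omega
  have hq2 : q % 2 = 1 := by omega
  have hp7 : 7 ≤ p := by omega
  have hq7 : 7 ≤ q := by omega
  have hppos : 0 < p := by omega
  have hqpos : 0 < q := by omega
  have hmpos : 0 < p * q := Nat.mul_pos hppos hqpos
  have hmodd : (p * q) % 2 = 1 :=
    Nat.odd_iff.mp (Nat.odd_mul.mpr ⟨Nat.odd_iff.mpr hp2, Nat.odd_iff.mpr hq2⟩)
  have hm49 : 49 ≤ p * q := Nat.mul_le_mul hp7 hq7
  have hm1 : 1 < p * q := by omega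
  have hplt : p < p * q := by
    have := Nat.mul_le_mul (Nat.le_refl p) (show 2 ≤ q by omega)
    omega
  have hqlt : q < p * q := by
    have := Nat.mul_le_mul (show 2 ≤ p by omega) (Nat.le_refl q)
    omega
  have hpq' : Nat.Coprime p q := (Nat.coprime_primes hp hq).mpr hpq
  have hpN' : Nat.Coprime p N := (Nat.Prime.coprime_iff_not_dvd hp).mpr hpN
  have hqN' : Nat.Coprime q N := (Nat.Prime.coprime_iff_not_dvd hq).mpr hqN
  have hmN : Nat.Coprime (p * q) N := Nat.Coprime.mul hpN' hqN'
  have foldp := fold_sum S t ht hS0 hSneg hSper p (by omega) hp2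
  have foldq := fold_sum S t ht hS0 hSneg hSper q (by omega) hq2
  have foldm := fold_sum S t ht hS0 hSneg hSper (p * q) hm1 hmodd
  obtain ⟨C, hCdef⟩ : ∃ C : ℤ, C = ∑ x ∈ Finset.Icc 1 ((p-1)/2), t ((x:ℚ)/(p:ℚ)) := ⟨_, rfl⟩
  obtain ⟨B, hBdef⟩ : ∃ B : ℤ, B = ∑ x ∈ Finset.Icc 1 ((q-1)/2), t ((x:ℚ)/(q:ℚ)) := ⟨_, rfl⟩
  obtain ⟨A, hAdef⟩ : ∃ A : ℤ,
      A = ∑ x ∈ Finset.Icc 1 ((p*q-1)/2), t ((x:ℚ)/((p*q : ℕ):ℚ)) := ⟨_, rfl⟩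
  have hCcast : (C : ℝ) = ∑ x ∈ Finset.Icc 1 ((p-1)/2), ((t ((x:ℚ)/(p:ℚ)) : ℝ)) := by
    rw [hCdef]; push_cast; rfl
  have hBcast : (B : ℝ) = ∑ x ∈ Finset.Icc 1 ((q-1)/2), ((t ((x:ℚ)/(q:ℚ)) : ℝ)) := by
    rw [hBdef]; push_cast; rfl
  have hAcast : (A : ℝ) = ∑ x ∈ Finset.Icc 1 ((p*q-1)/2), ((t ((x:ℚ)/((p*q : ℕ):ℚ)) : ℝ)) := by
    rw [hAdef]; push_cast; rfl
  -- Manin relation at p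
  have h1p : (1:ℕ) ∉ ({p} : Finset ℕ) := by simp; omega
  have HLp := hL p hppos hpN'
  rw [hp.divisors, Finset.sum_insert h1p, Finset.sum_singleton,
    Finset.sum_insert h1p, Finset.sum_singleton] at HLp
  simp only [Finset.range_one, Finset.sum_singleton, Nat.cast_zero, Nat.cast_one, zero_div,
    hS0, zero_add] at HLp
  rw [foldp, hL3, ← hCcast] at HLp
  have hCZ : a p - (1 + (p:ℤ)) = 3 * C := by
    have h0 : ((a p - (1 + (p:ℤ)) : ℤ) : ℝ) = ((3 * C : ℤ) : ℝ) := by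
      push_cast
      push_cast at HLp
      linarith [HLp]
    exact_mod_cast h0
  -- Manin relation at q
  have h1q : (1:ℕ) ∉ ({q} : Finset ℕ) := by simp; omega
  have HLq := hL q hqpos hqN'
  rw [hq.divisors, Finset.sum_insert h1q, Finset.sum_singleton,
    Finset.sum_insert h1q, Finset.sum_singleton] at HLq
  simp only [Finset.range_one, Finset.sum_singleton, Nat.cast_zero, Nat.cast_one, zero_div,
    hS0, zero_add] at HLq
  rw [foldq, hL3, ← hBcast] at HLq
  have hBZ : a q - (1 + (q:ℤ)) = 3 * B := by
    have h0 : ((a q - (1 + (q:ℤ)) : ℤ) : ℝ) = ((3 * B : ℤ) : ℝ) := by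
      push_cast
      push_cast at HLq
      linarith [HLq]
    exact_mod_cast h0
  -- Manin relation at p*q
  have hmem1 : (1:ℕ) ∉ (insert p (insert q ({p*q} : Finset ℕ))) := by
    simp only [Finset.mem_insert, Finset.mem_singleton]
    push_neg
    omega
  have hmemp : p ∉ (insert q ({p*q} : Finset ℕ)) := by
    simp only [Finset.mem_insert, Finset.mem_singleton]
    push_neg
    exact ⟨hpq, by omega⟩
  have hmemq : q ∉ ({p*q} : Finset ℕ) := by
    simp only [Finset.mem_singleton]
    omega
  have HLm := hL (p*q) hmpos hmN
  rw [divisors_pq hp hq hpq, Finset.sum_insert hmem1, Finset.sum_insert hmemp,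
    Finset.sum_insert hmemq, Finset.sum_singleton,
    Finset.sum_insert hmem1, Finset.sum_insert hmemp, Finset.sum_insert hmemq,
    Finset.sum_singleton] at HLm
  simp only [Finset.range_one, Finset.sum_singleton, Nat.cast_zero, Nat.cast_one, zero_div,
    hS0, zero_add] at HLm
  rw [foldp, foldq, foldm, hL3, hamul p q hpq', ← hCcast, ← hBcast, ← hAcast] at HLm
  have hAZ : a p * a q - (1 + (p:ℤ) + (q:ℤ) + (p:ℤ)*(q:ℤ)) = 3 * (C + B + A) := by
    have h0 : ((a p * a q - (1 + (p:ℤ) + (q:ℤ) + (p:ℤ)*(q:ℤ)) : ℤ) : ℝ)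
        = ((3 * (C + B + A) : ℤ) : ℝ) := by
      push_cast
      push_cast at HLm
      linarith [HLm]
    exact_mod_cast h0
  -- decomposition of the half range sum
  obtain ⟨D, hDdef⟩ : ∃ D : ℤ,
      D = ∑ x ∈ (Finset.Icc 1 ((p*q-1)/2)).filter (fun x => Nat.gcd x (p*q) = 1),
        t ((x:ℚ)/((p*q : ℕ):ℚ)) := ⟨_, rfl⟩
  have hBsum : ∑ x ∈ (Finset.Icc 1 ((p*q-1)/2)).filter (fun x => p ∣ x),
      t ((x:ℚ)/((p*q : ℕ):ℚ)) = B := by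
    rw [hBdef]
    exact reindex_mult t (by omega) (by omega)
  have hCsum : ∑ x ∈ (Finset.Icc 1 ((p*q-1)/2)).filter (fun x => q ∣ x),
      t ((x:ℚ)/((p*q : ℕ):ℚ)) = C := by
    have h := reindex_mult t (show 2 ≤ q by omega) (show 1 < p by omega)
    rw [mul_comm q p] at h
    rw [hCdef]
    exact h
  have hunion : (Finset.Icc 1 ((p*q-1)/2)).filter (fun x => ¬ Nat.gcd x (p*q) = 1)
      = (Finset.Icc 1 ((p*q-1)/2)).filter (fun x => p ∣ x)
        ∪ (Finset.Icc 1 ((p*q-1)/2)).filter (fun x => q ∣ x) := by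
    ext x
    simp only [Finset.mem_filter, Finset.mem_union]
    constructor
    · rintro ⟨hxs, hgcd⟩
      by_cases hpx : p ∣ x
      · exact Or.inl ⟨hxs, hpx⟩
      · refine Or.inr ⟨hxs, ?_⟩
        by_contra hqx
        exact hgcd (Nat.Coprime.mul_right
          (Nat.coprime_comm.mp ((hp.coprime_iff_not_dvd).mpr hpx))
          (Nat.coprime_comm.mp ((hq.coprime_iff_not_dvd).mpr hqx)))
    · rintro (⟨hxs, hdvd⟩ | ⟨hxs, hdvd⟩) <;> refine ⟨hxs, fun hco => ?_⟩
      · have h1 : p ∣ Nat.gcd x (p*q) := Nat.dvd_gcd hdvd (dvd_mul_right p q)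
        rw [hco] at h1
        have := Nat.le_of_dvd one_pos h1
        omega
      · have h1 : q ∣ Nat.gcd x (p*q) := Nat.dvd_gcd hdvd (dvd_mul_left q p)
        rw [hco] at h1
        have := Nat.le_of_dvd one_pos h1
        omega
  have hdisj : Disjoint ((Finset.Icc 1 ((p*q-1)/2)).filter (fun x => p ∣ x))
      ((Finset.Icc 1 ((p*q-1)/2)).filter (fun x => q ∣ x)) := by
    rw [Finset.disjoint_left]
    intro x hx1 hx2
    simp only [Finset.mem_filter, Finset.mem_Icc] at hx1 hx2
    obtain ⟨⟨hx1', hx2'⟩, hpx⟩ := hx1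
    obtain ⟨-, hqx⟩ := hx2
    have hd : p * q ∣ x := Nat.Coprime.mul_dvd_of_dvd_of_dvd hpq' hpx hqx
    have := Nat.le_of_dvd (by omega) hd
    omega
  have hADBC : A = D + B + C := by
    have e := (Finset.sum_filter_add_sum_filter_not (Finset.Icc 1 ((p*q-1)/2))
      (fun x => Nat.gcd x (p*q) = 1) (fun x => t ((x:ℚ)/((p*q : ℕ):ℚ)))).symm
    rw [hAdef, e, hunion, Finset.sum_union hdisj, hBsum, hCsum, ← hDdef]
    ring
  -- parity bookkeeping
  have hpZ : (p:ℤ) % 2 = 1 := by omega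
  have hqZ : (q:ℤ) % 2 = 1 := by omega
  have hpqZ : ((p:ℤ) * (q:ℤ)) % 2 = 1 :=
    Int.odd_iff.mp (Int.odd_mul.mpr ⟨Int.odd_iff.mpr hpZ, Int.odd_iff.mpr hqZ⟩)
  have hapZ : a p % 2 = 1 := Int.odd_iff.mp hap
  have haqZ : a q % 2 = 1 := Int.odd_iff.mp haq
  have hapaq : (a p * a q) % 2 = 1 := Int.odd_iff.mp (hap.mul haq)
  have hOddB : B % 2 = 1 := by omega
  have hOddC : C % 2 = 1 := by omega
  have hOddA : A % 2 = 1 := by omega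
  have hOddD : D % 2 = 1 := by omega
  -- the integer c
  refine ⟨∑ x ∈ (Finset.Icc 1 ((p*q-1)/2)).filter (fun x => Nat.gcd x (p*q) = 1),
    jacobiSym (x:ℤ) (p*q) * t ((x:ℚ)/((p*q : ℕ):ℚ)), ?_, ?_⟩
  · -- oddness
    have hcd : (∑ x ∈ (Finset.Icc 1 ((p*q-1)/2)).filter (fun x => Nat.gcd x (p*q) = 1),
        jacobiSym (x:ℤ) (p*q) * t ((x:ℚ)/((p*q : ℕ):ℚ))) % 2 = D % 2 := by
      rw [hDdef, Finset.sum_int_mod, Finset.sum_int_mod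
        ((Finset.Icc 1 ((p*q-1)/2)).filter (fun x => Nat.gcd x (p*q) = 1)) 2
        (fun x => t ((x:ℚ)/((p*q : ℕ):ℚ)))]
      congr 1
      refine Finset.sum_congr rfl fun x hx => ?_
      simp only [Finset.mem_filter] at hx
      have hgcd : Int.gcd (x:ℤ) ((p*q : ℕ):ℤ) = 1 := by
        rw [Int.gcd_natCast_natCast]; exact hx.2
      rcases jacobiSym.eq_one_or_neg_one hgcd with h | h <;> rw [h]
      · rw [one_mul]
      · omega
    rw [Int.odd_iff]
    omega
  · -- the cast identity
    push_cast
    refine Finset.sum_congr rfl fun x hx => ?_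
    rw [ht]
    ring
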